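/- Let d ≥ 2 and G > 1 + γ. Let the margin-based loss φ : ℝ → [0,∞) be bounded, continuous, non-increasing and quasi-concave even, and assume φ(−G) > φ(G). Then φ is H_relu-calibrated with respect to the adversarial 0/1 loss ℓ_γ if and only if for every t ∈ [0,1]: φ(G) + φ(−G) = φ(t+G) + φ(−t−G), and φ(γ) + φ(−γ) > φ(G) + φ(−G). -/

import Mathlib

open scoped RealInnerProductSpace

noncomputable section

/-- A loss assigns a value to a predictor `f`, a point `x`, and a label `y` (±1). -/
abbrev Loss (d : ℕ) := ((EuclideanSpace ℝ (Fin d)) → ℝ) → (EuclideanSpace ℝ (Fin d)) → ℝ → ℝ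

variable {d : ℕ}

/-- The inner (conditional) ℓ-risk. -/
def innerRisk (ℓ : Loss d) (f : EuclideanSpace ℝ (Fin d) → ℝ)
    (x : EuclideanSpace ℝ (Fin d)) (η : ℝ) : ℝ :=
  η * ℓ f x 1 + (1 - η) * ℓ f x (-1)

/-- The minimal inner ℓ-risk over a hypothesis set `H`. -/
def minInnerRisk (ℓ : Loss d) (H : Set (EuclideanSpace ℝ (Fin d) → ℝ))
    (x : EuclideanSpace ℝ (Fin d)) (η : ℝ) : ℝ :=
  ⨅ f : H, innerRisk ℓ f x η

/-- ℓ₁ is H-calibrated with respect to ℓ₂. -/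
def Calibrated (H : Set (EuclideanSpace ℝ (Fin d) → ℝ)) (ℓ₁ ℓ₂ : Loss d) : Prop :=
  ∀ ε > (0:ℝ), ∀ η ∈ Set.Icc (0:ℝ) 1, ∀ x : EuclideanSpace ℝ (Fin d), ‖x‖ ≤ 1 →
    ∃ δ > (0:ℝ), ∀ f ∈ H,
      innerRisk ℓ₁ f x η < minInnerRisk ℓ₁ H x η + δ →
      innerRisk ℓ₂ f x η < minInnerRisk ℓ₂ H x η + ε

/-- The adversarial 0/1 loss with perturbation radius γ. -/
def advLoss (γ : ℝ) : Loss d := fun f x y =>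
  ⨆ x' : Metric.closedBall x γ, (if y * f ↑x' ≤ 0 then (1:ℝ) else 0)

/-- A margin-based loss viewed as a loss. -/
def marginLoss (φ : ℝ → ℝ) : Loss d := fun f x y => φ (y * f x)

/-- The supremum-based surrogate of a margin-based loss. -/
def supLoss (γ : ℝ) (φ : ℝ → ℝ) : Loss d := fun f x y =>
  ⨆ x' : Metric.closedBall x γ, φ (y * f ↑x')

/-- Infimum of f over the closed γ-ball around x. -/
def infBall (γ : ℝ) (f : EuclideanSpace ℝ (Fin d) → ℝ) (x : EuclideanSpace ℝ (Fin d)) : ℝ :=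
  ⨅ x' : Metric.closedBall x γ, f ↑x'

/-- Supremum of f over the closed γ-ball around x. -/
def supBall (γ : ℝ) (f : EuclideanSpace ℝ (Fin d) → ℝ) (x : EuclideanSpace ℝ (Fin d)) : ℝ :=
  ⨆ x' : Metric.closedBall x γ, f ↑x'

/-- x is a distinguishing point for H. -/
def Distinguishing (γ : ℝ) (H : Set (EuclideanSpace ℝ (Fin d) → ℝ))
    (x : EuclideanSpace ℝ (Fin d)) : Prop :=
  ‖x‖ ≤ 1 ∧ (∃ f ∈ H, 0 < infBall γ f x) ∧ (∃ g ∈ H, supBall γ g x < 0)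

/-- H is regular for adversarial calibration. -/
def RegularAdv (γ : ℝ) (H : Set (EuclideanSpace ℝ (Fin d) → ℝ)) : Prop :=
  ∃ x, Distinguishing γ H x

/-- H is symmetric. -/
def SymmetricH (H : Set (EuclideanSpace ℝ (Fin d) → ℝ)) : Prop :=
  ∀ f ∈ H, -f ∈ H

/-- Linear hypothesis set. -/
def Hlin (d : ℕ) : Set (EuclideanSpace ℝ (Fin d) → ℝ) :=
  { f | ∃ w : EuclideanSpace ℝ (Fin d), ‖w‖ = 1 ∧ f = fun x => (inner ℝ w x : ℝ) }

/-- Generalized linear hypothesis set. -/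
def Hg (d : ℕ) (g : ℝ → ℝ) (G : ℝ) : Set (EuclideanSpace ℝ (Fin d) → ℝ) :=
  { f | ∃ (w : EuclideanSpace ℝ (Fin d)) (b : ℝ), ‖w‖ = 1 ∧ |b| ≤ G ∧
      f = fun x => g (inner ℝ w x : ℝ) + b }

/-- ReLU-based hypothesis set. -/
def Hrelu (d : ℕ) (G : ℝ) : Set (EuclideanSpace ℝ (Fin d) → ℝ) :=
  Hg d (fun t => max t 0) G

/-- One-layer ReLU neural network hypothesis set. -/
def Hnn (d n : ℕ) (Λ W : ℝ) : Set (EuclideanSpace ℝ (Fin d) → ℝ) :=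
  { f | ∃ (u : Fin n → ℝ) (w : Fin n → EuclideanSpace ℝ (Fin d)),
      (∑ j, |u j|) ≤ Λ ∧ (∀ j, ‖w j‖ ≤ W) ∧
      f = fun x => ∑ j, u j * max (inner ℝ (w j) x : ℝ) 0 }

/-- All (Borel) measurable functions. -/
def Hall (d : ℕ) : Set (EuclideanSpace ℝ (Fin d) → ℝ) :=
  { f | Measurable f }

/-- The ρ-margin loss. -/
def phiRho (ρ t : ℝ) : ℝ := min 1 (max 0 (1 - t / ρ))




lemma aux_iSup_ite_le_one {ι : Sort*} [Nonempty ι] (p : ι → Prop) [∀ i, Decidable (p i)] :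
    (⨆ i, if p i then (1:ℝ) else 0) ≤ 1 :=
  ciSup_le fun i => by split <;> norm_num

lemma aux_iSup_ite_nonneg {ι : Sort*} (p : ι → Prop) [∀ i, Decidable (p i)] :
    0 ≤ (⨆ i, if p i then (1:ℝ) else 0) :=
  Real.iSup_nonneg fun i => by split <;> norm_num

lemma aux_iSup_ite_eq_one {ι : Sort*} [Nonempty ι] (p : ι → Prop) [∀ i, Decidable (p i)]
    (h : ∃ i, p i) : (⨆ i, if p i then (1:ℝ) else 0) = 1 := by
  obtain ⟨i, hi⟩ := h
  refine le_antisymm (aux_iSup_ite_le_one p) ?_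
  have hb : BddAbove (Set.range fun i => if p i then (1:ℝ) else 0) := by
    refine ⟨1, ?_⟩; rintro _ ⟨j, rfl⟩; dsimp only; split <;> norm_num
  have := le_ciSup hb i
  simpa [hi] using this

lemma aux_iSup_ite_eq_zero {ι : Sort*} [Nonempty ι] (p : ι → Prop) [∀ i, Decidable (p i)]
    (h : ∀ i, ¬ p i) : (⨆ i, if p i then (1:ℝ) else 0) = 0 := by
  have : (fun i => if p i then (1:ℝ) else 0) = fun _ => (0:ℝ) := by
    funext i; simp [h i]
  rw [this, ciSup_const]

lemma ball_nonempty {x : EuclideanSpace ℝ (Fin d)} {γ : ℝ} (hγ : 0 ≤ γ) :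
    Nonempty (Metric.closedBall x γ) :=
  ⟨⟨x, Metric.mem_closedBall_self hγ⟩⟩

lemma advLoss_eq_one_pos {γ : ℝ} (hγ : 0 ≤ γ) {f : EuclideanSpace ℝ (Fin d) → ℝ}
    {x : EuclideanSpace ℝ (Fin d)} (h : ∃ z ∈ Metric.closedBall x γ, f z ≤ 0) :
    advLoss γ f x 1 = 1 := by
  have := ball_nonempty (d := d) (x := x) hγ
  refine aux_iSup_ite_eq_one _ ?_
  obtain ⟨z, hz, hfz⟩ := h
  exact ⟨⟨z, hz⟩, by simpa using hfz⟩

lemma advLoss_eq_one_neg {γ : ℝ} (hγ : 0 ≤ γ) {f : EuclideanSpace ℝ (Fin d) → ℝ}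
    {x : EuclideanSpace ℝ (Fin d)} (h : ∃ z ∈ Metric.closedBall x γ, 0 ≤ f z) :
    advLoss γ f x (-1) = 1 := by
  have := ball_nonempty (d := d) (x := x) hγ
  refine aux_iSup_ite_eq_one _ ?_
  obtain ⟨z, hz, hfz⟩ := h
  exact ⟨⟨z, hz⟩, by simpa using hfz⟩

lemma advLoss_eq_zero_pos {γ : ℝ} (hγ : 0 ≤ γ) {f : EuclideanSpace ℝ (Fin d) → ℝ}
    {x : EuclideanSpace ℝ (Fin d)} (h : ∀ z ∈ Metric.closedBall x γ, 0 < f z) :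
    advLoss γ f x 1 = 0 := by
  have := ball_nonempty (d := d) (x := x) hγ
  refine aux_iSup_ite_eq_zero _ ?_
  rintro ⟨z, hz⟩
  simpa using (h z hz)

lemma advLoss_eq_zero_neg {γ : ℝ} (hγ : 0 ≤ γ) {f : EuclideanSpace ℝ (Fin d) → ℝ}
    {x : EuclideanSpace ℝ (Fin d)} (h : ∀ z ∈ Metric.closedBall x γ, f z < 0) :
    advLoss γ f x (-1) = 0 := by
  have := ball_nonempty (d := d) (x := x) hγ
  refine aux_iSup_ite_eq_zero _ ?_
  rintro ⟨z, hz⟩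
  simpa using (h z hz)

lemma advLoss_nonneg (γ : ℝ) (f : EuclideanSpace ℝ (Fin d) → ℝ)
    (x : EuclideanSpace ℝ (Fin d)) (y : ℝ) : 0 ≤ advLoss γ f x y :=
  aux_iSup_ite_nonneg _

-- margin risk formula
lemma margin_innerRisk (φ : ℝ → ℝ) (f : EuclideanSpace ℝ (Fin d) → ℝ)
    (x : EuclideanSpace ℝ (Fin d)) (η : ℝ) :
    innerRisk (marginLoss φ) f x η = η * φ (f x) + (1 - η) * φ (-(f x)) := by
  simp [innerRisk, marginLoss]

lemma margin_innerRisk_nonneg {φ : ℝ → ℝ} (hφ0 : ∀ t, 0 ≤ φ t)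
    (f : EuclideanSpace ℝ (Fin d) → ℝ) (x : EuclideanSpace ℝ (Fin d)) {η : ℝ}
    (hη : η ∈ Set.Icc (0:ℝ) 1) : 0 ≤ innerRisk (marginLoss φ) f x η := by
  rw [margin_innerRisk]
  have h1 := hη.1; have h2 := hη.2
  have := hφ0 (f x); have := hφ0 (-(f x))
  nlinarith

lemma adv_innerRisk_nonneg {γ : ℝ} (f : EuclideanSpace ℝ (Fin d) → ℝ)
    (x : EuclideanSpace ℝ (Fin d)) {η : ℝ} (hη : η ∈ Set.Icc (0:ℝ) 1) :
    0 ≤ innerRisk (advLoss γ) f x η := by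
  have a := advLoss_nonneg (d := d) γ f x 1
  have b := advLoss_nonneg (d := d) γ f x (-1)
  have h1 := hη.1; have h2 := hη.2
  unfold innerRisk; nlinarith

lemma adv_innerRisk_pos {γ : ℝ} (hγ : 0 < γ) {f : EuclideanSpace ℝ (Fin d) → ℝ}
    {x : EuclideanSpace ℝ (Fin d)} (h : ∀ z ∈ Metric.closedBall x γ, 0 < f z) (η : ℝ) :
    innerRisk (advLoss γ) f x η = 1 - η := by
  have h1 : advLoss γ f x 1 = 0 := advLoss_eq_zero_pos hγ.le h
  have h2 : advLoss γ f x (-1) = 1 := advLoss_eq_one_neg hγ.le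
    ⟨x, Metric.mem_closedBall_self hγ.le, (h x (Metric.mem_closedBall_self hγ.le)).le⟩
  unfold innerRisk; rw [h1, h2]; ring

lemma adv_innerRisk_neg {γ : ℝ} (hγ : 0 < γ) {f : EuclideanSpace ℝ (Fin d) → ℝ}
    {x : EuclideanSpace ℝ (Fin d)} (h : ∀ z ∈ Metric.closedBall x γ, f z < 0) (η : ℝ) :
    innerRisk (advLoss γ) f x η = η := by
  have h1 : advLoss γ f x 1 = 1 := advLoss_eq_one_pos hγ.le
    ⟨x, Metric.mem_closedBall_self hγ.le, (h x (Metric.mem_closedBall_self hγ.le)).le⟩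
  have h2 : advLoss γ f x (-1) = 0 := advLoss_eq_zero_neg hγ.le h
  unfold innerRisk; rw [h1, h2]; ring

lemma adv_innerRisk_ge_min {γ : ℝ} (hγ : 0 < γ) (f : EuclideanSpace ℝ (Fin d) → ℝ)
    (x : EuclideanSpace ℝ (Fin d)) {η : ℝ} (hη : η ∈ Set.Icc (0:ℝ) 1) :
    min η (1 - η) ≤ innerRisk (advLoss γ) f x η := by
  have a0 := advLoss_nonneg (d := d) γ f x 1
  have b0 := advLoss_nonneg (d := d) γ f x (-1)
  have h1 := hη.1; have h2 := hη.2
  rcases le_or_gt (f x) 0 with hfx | hfx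
  · have ha : advLoss γ f x 1 = 1 := advLoss_eq_one_pos hγ.le
      ⟨x, Metric.mem_closedBall_self hγ.le, hfx⟩
    unfold innerRisk; rw [ha]
    have : min η (1-η) ≤ η := min_le_left _ _
    nlinarith
  · have hb : advLoss γ f x (-1) = 1 := advLoss_eq_one_neg hγ.le
      ⟨x, Metric.mem_closedBall_self hγ.le, hfx.le⟩
    unfold innerRisk; rw [hb]
    have : min η (1-η) ≤ 1 - η := min_le_right _ _
    nlinarith

lemma adv_innerRisk_ge_one_sub {γ : ℝ} (hγ : 0 < γ) {f : EuclideanSpace ℝ (Fin d) → ℝ}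
    {x : EuclideanSpace ℝ (Fin d)} (hfx : 0 ≤ f x) {η : ℝ} (hη : η ∈ Set.Icc (0:ℝ) 1) :
    1 - η ≤ innerRisk (advLoss γ) f x η := by
  have a0 := advLoss_nonneg (d := d) γ f x 1
  have hb : advLoss γ f x (-1) = 1 := advLoss_eq_one_neg hγ.le
    ⟨x, Metric.mem_closedBall_self hγ.le, hfx⟩
  have h1 := hη.1; have h2 := hη.2
  unfold innerRisk; rw [hb]; nlinarith

-- Hrelu facts
lemma mem_Hrelu {G : ℝ} {w : EuclideanSpace ℝ (Fin d)} {b : ℝ} (hw : ‖w‖ = 1) (hb : |b| ≤ G) :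
    (fun z => max (inner ℝ w z : ℝ) 0 + b) ∈ Hrelu d G :=
  ⟨w, b, hw, hb, rfl⟩

lemma Hrelu_lb {G : ℝ} {f : EuclideanSpace ℝ (Fin d) → ℝ} (hf : f ∈ Hrelu d G)
    (x : EuclideanSpace ℝ (Fin d)) : -G ≤ f x := by
  obtain ⟨w, b, hw, hb, rfl⟩ := hf
  have : -G ≤ b := neg_le_of_abs_le hb
  have : (0:ℝ) ≤ max (inner ℝ w x : ℝ) 0 := le_max_right _ _
  dsimp only; linarith

lemma Hrelu_ub {G : ℝ} {f : EuclideanSpace ℝ (Fin d) → ℝ} (hf : f ∈ Hrelu d G)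
    (x : EuclideanSpace ℝ (Fin d)) : f x ≤ ‖x‖ + G := by
  obtain ⟨w, b, hw, hb, rfl⟩ := hf
  have hb' : b ≤ G := le_of_abs_le hb
  have h1 : (inner ℝ w x : ℝ) ≤ ‖x‖ := by
    have := abs_real_inner_le_norm w x
    rw [hw, one_mul] at this
    exact (abs_le.1 this).2
  have h2 : max (inner ℝ w x : ℝ) 0 ≤ ‖x‖ := max_le h1 (norm_nonneg x)
  dsimp only; linarith

lemma Hrelu_lip {G : ℝ} {f : EuclideanSpace ℝ (Fin d) → ℝ} (hf : f ∈ Hrelu d G)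
    (x z : EuclideanSpace ℝ (Fin d)) : |f z - f x| ≤ ‖z - x‖ := by
  obtain ⟨w, b, hw, hb, rfl⟩ := hf
  dsimp only
  have h1 : |max (inner ℝ w z : ℝ) 0 + b - (max (inner ℝ w x : ℝ) 0 + b)|
      = |max (inner ℝ w z : ℝ) 0 - max (inner ℝ w x : ℝ) 0| := by ring_nf
  rw [h1]
  refine le_trans (abs_max_sub_max_le_abs _ _ _) ?_
  have : (inner ℝ w z : ℝ) - inner ℝ w x = inner ℝ w (z - x) := (inner_sub_right _ _ _).symm
  rw [this]
  have := abs_real_inner_le_norm w (z - x)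
  rwa [hw, one_mul] at this

lemma exists_unit_inner (hd : 2 ≤ d) (x : EuclideanSpace ℝ (Fin d)) :
    ∃ w : EuclideanSpace ℝ (Fin d), ‖w‖ = 1 ∧ (inner ℝ w x : ℝ) = ‖x‖ := by
  rcases eq_or_ne x 0 with rfl | hx
  · refine ⟨EuclideanSpace.single (⟨0, by omega⟩ : Fin d) (1:ℝ), ?_, by simp⟩
    rw [EuclideanSpace.norm_single]; norm_num
  · refine ⟨‖x‖⁻¹ • x, ?_, ?_⟩
    · rw [norm_smul, Real.norm_eq_abs, abs_inv, abs_norm, inv_mul_cancel₀ (norm_ne_zero_iff.2 hx)]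
    · rw [real_inner_smul_left, real_inner_self_eq_norm_mul_norm,
        inv_mul_cancel_left₀ (norm_ne_zero_iff.2 hx)]

lemma fplus_spec (hd : 2 ≤ d) {G : ℝ} (hG : 0 < G) (x : EuclideanSpace ℝ (Fin d)) :
    ∃ f ∈ Hrelu d G, f x = ‖x‖ + G ∧ ∀ z, 0 < f z := by
  obtain ⟨w, hw, hwx⟩ := exists_unit_inner hd x
  refine ⟨fun z => max (inner ℝ w z : ℝ) 0 + G, mem_Hrelu hw (by rw [abs_of_pos hG]), ?_, ?_⟩
  · dsimp only; rw [hwx, max_eq_left (norm_nonneg x)]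
  · intro z; dsimp only
    have : (0:ℝ) ≤ max (inner ℝ w z : ℝ) 0 := le_max_right _ _
    linarith

lemma fminus_spec (hd : 2 ≤ d) {G : ℝ} (hG : 0 < G) (x : EuclideanSpace ℝ (Fin d)) :
    ∃ f ∈ Hrelu d G, f x = -G ∧ ∀ z, f z ≤ ‖z‖ - G := by
  obtain ⟨w, hw, hwx⟩ := exists_unit_inner hd x
  refine ⟨fun z => max (inner ℝ (-w) z : ℝ) 0 + (-G), ?_, ?_, ?_⟩
  · exact mem_Hrelu (by rw [norm_neg, hw]) (by rw [abs_neg, abs_of_pos hG])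
  · dsimp only
    rw [inner_neg_left, hwx, max_eq_right (neg_nonpos_of_nonneg (norm_nonneg x))]
    ring
  · intro z; dsimp only
    have h1 : (inner ℝ (-w) z : ℝ) ≤ ‖z‖ := by
      have := abs_real_inner_le_norm (-w) z
      rw [norm_neg, hw, one_mul] at this
      exact (abs_le.1 this).2
    have h2 : max (inner ℝ (-w) z : ℝ) 0 ≤ ‖z‖ := max_le h1 (norm_nonneg z)
    linarith

lemma Hrelu_nonempty (hd : 2 ≤ d) {G : ℝ} (hG : 0 < G) : Nonempty (Hrelu d G) := by
  obtain ⟨f, hf, -⟩ := fplus_spec hd hG (0 : EuclideanSpace ℝ (Fin d))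
  exact ⟨⟨f, hf⟩⟩

lemma minInnerRisk_le {ℓ : Loss d} {H : Set (EuclideanSpace ℝ (Fin d) → ℝ)}
    {x : EuclideanSpace ℝ (Fin d)} {η : ℝ}
    (h0 : ∀ g ∈ H, 0 ≤ innerRisk ℓ g x η) {f : EuclideanSpace ℝ (Fin d) → ℝ} (hf : f ∈ H) :
    minInnerRisk ℓ H x η ≤ innerRisk ℓ f x η := by
  have hb : BddBelow (Set.range fun g : H => innerRisk ℓ g x η) := by
    refine ⟨0, ?_⟩; rintro _ ⟨g, rfl⟩; exact h0 g g.2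
  exact ciInf_le hb (⟨f, hf⟩ : H)

lemma le_minInnerRisk {ℓ : Loss d} {H : Set (EuclideanSpace ℝ (Fin d) → ℝ)}
    [Nonempty H] {x : EuclideanSpace ℝ (Fin d)} {η c : ℝ}
    (h : ∀ g ∈ H, c ≤ innerRisk ℓ g x η) : c ≤ minInnerRisk ℓ H x η :=
  le_ciInf fun g => h g g.2

-- quasiconcave even ⇒ monotonicity on symmetric intervals
lemma psi_anti {φ : ℝ → ℝ} (hqce : QuasiconcaveOn ℝ Set.univ (fun t => φ t + φ (-t)))
    {s c : ℝ} (h1 : -c ≤ s) (h2 : s ≤ c) : φ c + φ (-c) ≤ φ s + φ (-s) := by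
  have hconv : Convex ℝ {z ∈ Set.univ | φ c + φ (-c) ≤ φ z + φ (-z)} := hqce (φ c + φ (-c))
  have hc : c ∈ {z ∈ Set.univ | φ c + φ (-c) ≤ φ z + φ (-z)} := ⟨trivial, le_refl _⟩
  have hnc : -c ∈ {z ∈ Set.univ | φ c + φ (-c) ≤ φ z + φ (-z)} := by
    refine ⟨trivial, ?_⟩; rw [neg_neg]; linarith
  have hseg := hconv.segment_subset hnc hc
  rw [segment_eq_Icc (by linarith : -c ≤ c)] at hseg
  exact (hseg ⟨h1, h2⟩).2

set_option maxHeartbeats 2000000 in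
theorem stmt11 (d : ℕ) (hd : 2 ≤ d) (γ : ℝ) (hγ0 : 0 < γ) (hγ1 : γ < 1)
    (G : ℝ) (hG : 1 + γ < G)
    (φ : ℝ → ℝ) (hφ0 : ∀ t, 0 ≤ φ t) (hbdd : ∃ M, ∀ t, φ t ≤ M)
    (hcont : Continuous φ) (hanti : Antitone φ)
    (hqce : QuasiconcaveOn ℝ Set.univ (fun t => φ t + φ (-t)))
    (hstrict : φ G < φ (-G)) :
    Calibrated (Hrelu d G) (marginLoss φ) (advLoss γ) ↔
      ∀ t ∈ Set.Icc (0:ℝ) 1,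
        φ G + φ (-G) = φ (t + G) + φ (-t - G) ∧
        φ G + φ (-G) < φ γ + φ (-γ) := by
  obtain ⟨M, hM⟩ := hbdd
  have hG0 : (0:ℝ) < G := by linarith
  haveI hne : Nonempty (Hrelu d G) := Hrelu_nonempty hd hG0
  have hM0 : 0 ≤ M := le_trans (hφ0 0) (hM 0)
  constructor
  · intro hcal
    have hQ : φ G + φ (-G) < φ γ + φ (-γ) := by
      by_contra hq
      push_neg at hq
      have hψγ : φ G + φ (-G) ≤ φ γ + φ (-γ) := psi_anti hqce (by linarith) (by linarith)
      have hψeq : φ γ + φ (-γ) = φ G + φ (-G) := le_antisymm hq hψγ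
      have h0le : ‖(0 : EuclideanSpace ℝ (Fin d))‖ ≤ 1 := by simp
      obtain ⟨δ, hδ, himp⟩ := hcal (1/2) (by norm_num) (1/2) ⟨by norm_num, by norm_num⟩ 0 h0le
      obtain ⟨w0, hw0, -⟩ := exists_unit_inner hd (0 : EuclideanSpace ℝ (Fin d))
      have hf₀mem : (fun z => max (inner ℝ w0 z : ℝ) 0 + (-γ)) ∈ Hrelu d G :=
        mem_Hrelu hw0 (by rw [abs_neg, abs_of_pos hγ0]; linarith)
      have hf₀0 : max (inner ℝ w0 (0 : EuclideanSpace ℝ (Fin d)) : ℝ) 0 + (-γ) = -γ := by simp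
      have hnear : innerRisk (marginLoss φ) (fun z => max (inner ℝ w0 z : ℝ) 0 + (-γ)) 0 (1/2)
          < minInnerRisk (marginLoss φ) (Hrelu d G) 0 (1/2) + δ := by
        have hle : innerRisk (marginLoss φ) (fun z => max (inner ℝ w0 z : ℝ) 0 + (-γ)) 0 (1/2)
            ≤ minInnerRisk (marginLoss φ) (Hrelu d G) 0 (1/2) := by
          apply le_minInnerRisk
          intro g hg
          have hgl : -G ≤ g 0 := Hrelu_lb hg 0
          have hgu : g 0 ≤ G := by simpa using Hrelu_ub hg 0
          have h1 := psi_anti hqce hgl hgu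
          rw [margin_innerRisk, margin_innerRisk]
          rw [hf₀0]
          simp only [neg_neg]
          linarith
        linarith
      have hbad := himp _ hf₀mem hnear
      have h00 : (fun z => max (inner ℝ w0 z : ℝ) 0 + (-γ)) 0 ≤ 0 := by
        have h' : max (inner ℝ w0 (0 : EuclideanSpace ℝ (Fin d)) : ℝ) 0 + (-γ) ≤ 0 := by
          rw [hf₀0]; linarith
        exact h'
      have ha : advLoss γ (fun z => max (inner ℝ w0 z : ℝ) 0 + (-γ)) 0 1 = 1 :=
        advLoss_eq_one_pos hγ0.le
          ⟨0, Metric.mem_closedBall_self hγ0.le, h00⟩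
      have hwmem : γ • w0 ∈ Metric.closedBall (0 : EuclideanSpace ℝ (Fin d)) γ := by
        rw [Metric.mem_closedBall, dist_zero_right, norm_smul, hw0, mul_one,
          Real.norm_eq_abs, abs_of_pos hγ0]
      have hfw : (fun z => max (inner ℝ w0 z : ℝ) 0 + (-γ)) (γ • w0) = 0 := by
        dsimp only
        rw [real_inner_smul_right, real_inner_self_eq_norm_mul_norm, hw0]
        rw [show γ * (1*1) = γ by ring, max_eq_left hγ0.le]
        ring
      have hb : advLoss γ (fun z => max (inner ℝ w0 z : ℝ) 0 + (-γ)) 0 (-1) = 1 :=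
        advLoss_eq_one_neg hγ0.le ⟨γ • w0, hwmem, le_of_eq hfw.symm⟩
      obtain ⟨fp, hfp, -, hfppos⟩ := fplus_spec hd hG0 (0 : EuclideanSpace ℝ (Fin d))
      have hm2 : minInnerRisk (advLoss γ) (Hrelu d G) 0 (1/2) ≤ 1 - 1/2 := by
        have h := minInnerRisk_le (ℓ := advLoss γ)
          (fun g _ => adv_innerRisk_nonneg (γ := γ) g 0
            (show (1/2:ℝ) ∈ Set.Icc (0:ℝ) 1 by constructor <;> norm_num)) hfp
        rwa [adv_innerRisk_pos hγ0 (fun z _ => hfppos z)] at h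
      unfold innerRisk at hbad
      rw [ha, hb] at hbad
      norm_num at hbad hm2
      linarith
    intro t ht
    refine ⟨?_, hQ⟩
    by_contra hneq
    rw [show -t - G = -(t + G) by ring] at hneq
    have hψle : φ (t+G) + φ (-(t+G)) ≤ φ G + φ (-G) :=
      psi_anti hqce (by linarith [ht.1]) (by linarith [ht.1])
    obtain ⟨Δ, hΔdef⟩ : ∃ Δ : ℝ, Δ = (φ G + φ (-G)) - (φ (t+G) + φ (-(t+G))) := ⟨_, rfl⟩
    have hΔpos : 0 < Δ := by
      rw [hΔdef]
      rcases lt_or_eq_of_le hψle with h | h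
      · linarith
      · exact absurd h.symm hneq
    obtain ⟨θ, hθdef⟩ : ∃ θ : ℝ, θ = Δ / (16*(M+1)) := ⟨_, rfl⟩
    have hθpos : 0 < θ := by rw [hθdef]; exact div_pos hΔpos (by linarith)
    have hΔle : Δ ≤ 2*M := by
      rw [hΔdef]
      have := hM G; have := hM (-G); have := hφ0 (t+G); have := hφ0 (-(t+G)); linarith
    have hθdef' : θ * (16*(M+1)) = Δ := by
      rw [hθdef]; field_simp
    have hθ8 : θ ≤ 1/8 := by nlinarith
    obtain ⟨η, hηdef⟩ : ∃ η : ℝ, η = 1/2 - θ := ⟨_, rfl⟩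
    have hη01 : η ∈ Set.Icc (0:ℝ) 1 := by
      constructor <;> rw [hηdef] <;> linarith
    obtain ⟨w0, hw0, -⟩ := exists_unit_inner hd (0 : EuclideanSpace ℝ (Fin d))
    obtain ⟨x, hxn⟩ : ∃ x : EuclideanSpace ℝ (Fin d), ‖x‖ = t :=
      ⟨t • w0, by rw [norm_smul, hw0, mul_one, Real.norm_eq_abs, abs_of_nonneg ht.1]⟩
    have hx1 : ‖x‖ ≤ 1 := by rw [hxn]; exact ht.2
    obtain ⟨δ, hδpos, himp⟩ := hcal (2*θ) (by linarith) η hη01 x hx1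
    obtain ⟨δ', hδ'def⟩ : ∃ δ' : ℝ, δ' = min δ (Δ/4) := ⟨_, rfl⟩
    have hδ'pos : 0 < δ' := by rw [hδ'def]; exact lt_min hδpos (by linarith)
    obtain ⟨fp, hfp, hfpx, hfppos⟩ := fplus_spec hd hG0 x
    obtain ⟨fm, hfm, hfmx, hfmub⟩ := fminus_spec hd hG0 x
    have hmargin_nonneg : ∀ g ∈ Hrelu d G, 0 ≤ innerRisk (marginLoss φ) g x η :=
      fun g _ => margin_innerRisk_nonneg hφ0 g x hη01
    have hm1top : minInnerRisk (marginLoss φ) (Hrelu d G) x η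
        ≤ η * φ (t+G) + (1-η) * φ (-(t+G)) := by
      have h := minInnerRisk_le hmargin_nonneg hfp
      rw [margin_innerRisk, hfpx, hxn] at h
      exact h
    obtain ⟨C₀, hC₀def⟩ : ∃ C₀ : ℝ, C₀ = φ (-(t+G)) - φ G := ⟨_, rfl⟩
    have hC₀0 : 0 ≤ C₀ := by
      rw [hC₀def]
      have := hanti (show -(t+G) ≤ G by linarith [ht.1]); linarith
    have hC₀M : C₀ ≤ M := by
      rw [hC₀def]; have := hM (-(t+G)); have := hφ0 G; linarith
    have key : (η * φ (-G) + (1-η) * φ G) - (η * φ (t+G) + (1-η) * φ (-(t+G)))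
        = η * Δ - (1 - 2*η) * C₀ := by
      rw [hΔdef, hC₀def]; ring
    have p1 : θ * Δ ≤ θ * (2*M) := mul_le_mul_of_nonneg_left hΔle hθpos.le
    have p2 : θ * C₀ ≤ θ * M := mul_le_mul_of_nonneg_left hC₀M hθpos.le
    have hnum : Δ/4 ≤ η * Δ - (1 - 2*η) * C₀ := by
      rw [hηdef]; ring_nf; ring_nf at p1 p2 hθdef'; linarith
    have hbotTop : (η * φ (t+G) + (1-η) * φ (-(t+G))) + Δ/4
        ≤ η * φ (-G) + (1-η) * φ G := by linarith
    have hlt2 : minInnerRisk (marginLoss φ) (Hrelu d G) x η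
        < minInnerRisk (marginLoss φ) (Hrelu d G) x η + δ' := by linarith
    obtain ⟨g, hg⟩ := exists_lt_of_ciInf_lt hlt2
    have hgl : -G ≤ (g : EuclideanSpace ℝ (Fin d) → ℝ) x := Hrelu_lb g.2 x
    have hgu : (g : EuclideanSpace ℝ (Fin d) → ℝ) x ≤ t + G := by
      have := Hrelu_ub g.2 x; rwa [hxn] at this
    rw [margin_innerRisk] at hg
    have hs0 : 0 ≤ (g : EuclideanSpace ℝ (Fin d) → ℝ) x := by
      by_contra hneg
      push_neg at hneg
      have h1 : φ G ≤ φ (-((g : EuclideanSpace ℝ (Fin d) → ℝ) x)) := hanti (by linarith)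
      have h2 := psi_anti hqce hgl (le_of_lt (lt_trans hneg hG0))
      have key2 : η * φ ((g : EuclideanSpace ℝ (Fin d) → ℝ) x)
            + (1-η) * φ (-((g : EuclideanSpace ℝ (Fin d) → ℝ) x))
          = (η * φ (-G) + (1-η) * φ G)
            + (1-2*η) * (φ (-((g : EuclideanSpace ℝ (Fin d) → ℝ) x)) - φ G)
            + η * ((φ ((g : EuclideanSpace ℝ (Fin d) → ℝ) x)
                + φ (-((g : EuclideanSpace ℝ (Fin d) → ℝ) x))) - (φ G + φ (-G))) := by ring
      have hη2 : 0 ≤ 1 - 2*η := by rw [hηdef]; linarith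
      have c1 : 0 ≤ (1-2*η) * (φ (-((g : EuclideanSpace ℝ (Fin d) → ℝ) x)) - φ G) :=
        mul_nonneg hη2 (by linarith)
      have c2 : 0 ≤ η * ((φ ((g : EuclideanSpace ℝ (Fin d) → ℝ) x)
          + φ (-((g : EuclideanSpace ℝ (Fin d) → ℝ) x))) - (φ G + φ (-G))) :=
        mul_nonneg hη01.1 (by linarith)
      have hd4 : δ' ≤ Δ/4 := hδ'def ▸ min_le_right _ _
      linarith
    have hnear' : innerRisk (marginLoss φ) (g : EuclideanSpace ℝ (Fin d) → ℝ) x η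
        < minInnerRisk (marginLoss φ) (Hrelu d G) x η + δ := by
      rw [margin_innerRisk]
      have hdd : δ' ≤ δ := hδ'def ▸ min_le_left _ _
      linarith
    have hbad := himp _ g.2 hnear'
    have hge : 1 - η ≤ innerRisk (advLoss γ) (g : EuclideanSpace ℝ (Fin d) → ℝ) x η :=
      adv_innerRisk_ge_one_sub hγ0 hs0 hη01
    have hball_neg : ∀ z ∈ Metric.closedBall x γ, fm z < 0 := by
      intro z hz
      have h1 : fm z ≤ ‖z‖ - G := hfmub z
      have h2 : ‖z‖ - ‖x‖ ≤ ‖z - x‖ := norm_sub_norm_le z x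
      have h3 : ‖z - x‖ ≤ γ := by rw [← dist_eq_norm]; exact Metric.mem_closedBall.1 hz
      have h4 : ‖x‖ ≤ 1 := hx1
      linarith
    have hm2b : minInnerRisk (advLoss γ) (Hrelu d G) x η ≤ η := by
      have h := minInnerRisk_le (ℓ := advLoss γ)
        (fun g' _ => adv_innerRisk_nonneg (γ := γ) g' x hη01) hfm
      rwa [adv_innerRisk_neg hγ0 hball_neg] at h
    rw [hηdef] at hge hbad hm2b
    linarith

  · intro hcond
    intro ε hε η hη x hx
    have hη0 := hη.1; have hη1 := hη.2
    have hr0 : (0:ℝ) ≤ ‖x‖ := norm_nonneg x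
    have heqr : φ G + φ (-G) = φ (‖x‖ + G) + φ (-(‖x‖ + G)) := by
      have h := (hcond ‖x‖ ⟨hr0, hx⟩).1
      have e : -‖x‖ - G = -(‖x‖ + G) := by ring
      rwa [e] at h
    have hlt : φ G + φ (-G) < φ γ + φ (-γ) := (hcond 0 ⟨le_refl 0, zero_le_one⟩).2
    have hφnγ : φ (-γ) ≤ φ (-G) := hanti (by linarith)
    have hφγG : φ γ ≤ φ (-G) := le_trans (hanti (by linarith : -γ ≤ γ)) hφnγ
    obtain ⟨A, hAdef⟩ : ∃ A : ℝ, A = φ γ - φ G := ⟨_, rfl⟩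
    obtain ⟨B, hBdef⟩ : ∃ B : ℝ, B = (φ γ + φ (-γ)) - (φ G + φ (-G)) := ⟨_, rfl⟩
    have hBpos : 0 < B := by simp only [hBdef]; linarith
    have hAB : B ≤ A := by simp only [hAdef, hBdef]; linarith
    have hApos : 0 < A := lt_of_lt_of_le hBpos hAB
    obtain ⟨δ, hδdef⟩ : ∃ δ : ℝ, δ = min (min A (B/2)) (ε * A) := ⟨_, rfl⟩
    have hδpos : 0 < δ := by
      rw [hδdef]; exact lt_min (lt_min hApos (by linarith)) (mul_pos hε hApos)
    refine ⟨δ, hδpos, ?_⟩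
    intro f hf hnear
    have hsl : -G ≤ f x := Hrelu_lb hf x
    have hsu : f x ≤ ‖x‖ + G := Hrelu_ub hf x
    obtain ⟨fp, hfp, hfpx, hfppos⟩ := fplus_spec hd hG0 x
    obtain ⟨fm, hfm, hfmx, hfmub⟩ := fminus_spec hd hG0 x
    have hmargin_nonneg : ∀ g ∈ Hrelu d G, 0 ≤ innerRisk (marginLoss φ) g x η :=
      fun g _ => margin_innerRisk_nonneg hφ0 g x hη
    have hm1top : minInnerRisk (marginLoss φ) (Hrelu d G) x η
        ≤ η * φ (‖x‖ + G) + (1 - η) * φ (-(‖x‖ + G)) := by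
      have h := minInnerRisk_le hmargin_nonneg hfp
      rwa [margin_innerRisk, hfpx] at h
    have hm1bot : minInnerRisk (marginLoss φ) (Hrelu d G) x η
        ≤ η * φ (-G) + (1 - η) * φ G := by
      have h := minInnerRisk_le hmargin_nonneg hfm
      rw [margin_innerRisk, hfmx] at h
      simpa using h
    have hball_neg : ∀ z ∈ Metric.closedBall x γ, fm z < 0 := by
      intro z hz
      have h1 : fm z ≤ ‖z‖ - G := hfmub z
      have h2 : ‖z‖ - ‖x‖ ≤ ‖z - x‖ := norm_sub_norm_le z x
      have h3 : ‖z - x‖ ≤ γ := by rw [← dist_eq_norm]; exact Metric.mem_closedBall.1 hz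
      have h4 : ‖x‖ ≤ 1 := hx
      linarith
    have hadv_nonneg : ∀ g ∈ Hrelu d G, 0 ≤ innerRisk (advLoss γ) g x η :=
      fun g _ => adv_innerRisk_nonneg g x hη
    have hm2a : minInnerRisk (advLoss γ) (Hrelu d G) x η ≤ 1 - η := by
      have h := minInnerRisk_le hadv_nonneg hfp
      rwa [adv_innerRisk_pos hγ0 (fun z _ => hfppos z)] at h
    have hm2b : minInnerRisk (advLoss γ) (Hrelu d G) x η ≤ η := by
      have h := minInnerRisk_le hadv_nonneg hfm
      rwa [adv_innerRisk_neg hγ0 hball_neg] at h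
    have hm2ge : min η (1 - η) ≤ minInnerRisk (advLoss γ) (Hrelu d G) x η :=
      le_minInnerRisk (fun g _ => adv_innerRisk_ge_min hγ0 g x hη)
    rw [margin_innerRisk] at hnear
    have hφrG : φ (‖x‖ + G) ≤ φ G := hanti (by linarith)
    rcases lt_or_ge γ (f x) with hsgt | hsle
    · -- f positive on the ball
      have hpos : ∀ z ∈ Metric.closedBall x γ, 0 < f z := by
        intro z hz
        have h1 : |f z - f x| ≤ ‖z - x‖ := Hrelu_lip hf x z
        have h2 : ‖z - x‖ ≤ γ := by rw [← dist_eq_norm]; exact Metric.mem_closedBall.1 hz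
        have h3 := (abs_le.1 h1).1
        linarith
      rw [adv_innerRisk_pos hγ0 hpos]
      rcases le_or_gt (1/2 : ℝ) η with hhalf | hhalf
      · have hmeq : min η (1 - η) = 1 - η := min_eq_right (by linarith)
        rw [hmeq] at hm2ge; linarith
      · -- need 1 - 2η < ε; otherwise contradiction with hnear
        by_contra hcon
        push_neg at hcon
        have hmeq : min η (1 - η) = η := min_eq_left (by linarith)
        rw [hmeq] at hm2ge
        have hεle : ε ≤ 1 - 2*η := by linarith
        have hφns : φ γ ≤ φ (-(f x)) :=
          le_trans (hanti (by linarith : -γ ≤ γ)) (hanti (by linarith : -(f x) ≤ -γ))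
        have hψs : φ G + φ (-G) ≤ φ (f x) + φ (-(f x)) := by
          have := psi_anti hqce (show -(‖x‖+G) ≤ f x by linarith) (show f x ≤ ‖x‖+G from hsu)
          linarith [heqr]
        have key : η * φ (f x) + (1 - η) * φ (-(f x))
            = (η * φ (-G) + (1 - η) * φ G) + (1 - 2*η) * (φ (-(f x)) - φ G)
              + η * ((φ (f x) + φ (-(f x))) - (φ G + φ (-G))) := by ring
        have k1 : (1 - 2*η) * A ≤ (1 - 2*η) * (φ (-(f x)) - φ G) := by
          apply mul_le_mul_of_nonneg_left (by simp only [hAdef]; linarith) (by linarith)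
        have k2 : ε * A ≤ (1 - 2*η) * A := by nlinarith
        have k3 : 0 ≤ η * ((φ (f x) + φ (-(f x))) - (φ G + φ (-G))) :=
          mul_nonneg hη0 (by linarith)
        have k4 : δ ≤ ε * A := hδdef ▸ min_le_right _ _
        linarith
    rcases lt_or_ge (f x) (-γ) with hslt | hsge
    · -- f negative on the ball
      have hneg : ∀ z ∈ Metric.closedBall x γ, f z < 0 := by
        intro z hz
        have h1 : |f z - f x| ≤ ‖z - x‖ := Hrelu_lip hf x z
        have h2 : ‖z - x‖ ≤ γ := by rw [← dist_eq_norm]; exact Metric.mem_closedBall.1 hz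
        have h3 := (abs_le.1 h1).2
        linarith
      rw [adv_innerRisk_neg hγ0 hneg]
      rcases le_or_gt η (1/2 : ℝ) with hhalf | hhalf
      · have hmeq : min η (1 - η) = η := min_eq_left (by linarith)
        rw [hmeq] at hm2ge; linarith
      · by_contra hcon
        push_neg at hcon
        have hmeq : min η (1 - η) = 1 - η := min_eq_right (by linarith)
        rw [hmeq] at hm2ge
        have hεle : ε ≤ 2*η - 1 := by linarith
        have hφs : φ γ ≤ φ (f x) :=
          le_trans (hanti (by linarith : -γ ≤ γ)) (hanti (by linarith : f x ≤ -γ))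
        have hψs : φ (‖x‖ + G) + φ (-(‖x‖ + G)) ≤ φ (f x) + φ (-(f x)) := by
          have := psi_anti hqce (show -G ≤ f x from hsl) (show f x ≤ G by linarith)
          linarith [heqr]
        have key : η * φ (f x) + (1 - η) * φ (-(f x))
            = (η * φ (‖x‖ + G) + (1 - η) * φ (-(‖x‖ + G)))
              + (2*η - 1) * (φ (f x) - φ (‖x‖ + G))
              + (1 - η) * ((φ (f x) + φ (-(f x))) - (φ (‖x‖ + G) + φ (-(‖x‖ + G)))) := by ring
        have k1 : (2*η - 1) * A ≤ (2*η - 1) * (φ (f x) - φ (‖x‖ + G)) := by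
          apply mul_le_mul_of_nonneg_left (by simp only [hAdef]; linarith) (by linarith)
        have k2 : ε * A ≤ (2*η - 1) * A := by nlinarith
        have k3 : 0 ≤ (1 - η) * ((φ (f x) + φ (-(f x))) - (φ (‖x‖ + G) + φ (-(‖x‖ + G)))) :=
          mul_nonneg (by linarith) (by linarith)
        have k4 : δ ≤ ε * A := hδdef ▸ min_le_right _ _
        linarith
    · -- -γ ≤ f x ≤ γ : contradiction with near-minimality
      exfalso
      have hφsγ : φ γ ≤ φ (f x) := hanti hsle
      have hφnsγ : φ γ ≤ φ (-(f x)) := hanti (by linarith)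
      have hψsγ : φ γ + φ (-γ) ≤ φ (f x) + φ (-(f x)) := by
        have := psi_anti hqce (show -γ ≤ f x from hsge) (show f x ≤ γ from hsle)
        linarith
      have k4 : δ ≤ min A (B/2) := hδdef ▸ min_le_left _ _
      rcases le_or_gt (1/2 : ℝ) η with hhalf | hhalf
      · have key : η * φ (f x) + (1 - η) * φ (-(f x))
            = (η * φ (‖x‖ + G) + (1 - η) * φ (-(‖x‖ + G)))
              + (2*η - 1) * (φ (f x) - φ (‖x‖ + G))
              + (1 - η) * ((φ (f x) + φ (-(f x))) - (φ (‖x‖ + G) + φ (-(‖x‖ + G)))) := by ring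
        have k1 : (2*η - 1) * A ≤ (2*η - 1) * (φ (f x) - φ (‖x‖ + G)) := by
          apply mul_le_mul_of_nonneg_left (by simp only [hAdef]; linarith) (by linarith)
        have k2 : (1 - η) * B ≤ (1 - η) * ((φ (f x) + φ (-(f x))) - (φ (‖x‖ + G) + φ (-(‖x‖ + G)))) := by
          apply mul_le_mul_of_nonneg_left (by simp only [hBdef]; linarith [heqr]) (by linarith)
        have k5 : min A (B/2) ≤ (2*η - 1) * A + (1 - η) * B := by
          have m1 : min A (B/2) ≤ A := min_le_left _ _
          have m2 : min A (B/2) ≤ B/2 := min_le_right _ _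
          nlinarith
        linarith
      · have key : η * φ (f x) + (1 - η) * φ (-(f x))
            = (η * φ (-G) + (1 - η) * φ G) + (1 - 2*η) * (φ (-(f x)) - φ G)
              + η * ((φ (f x) + φ (-(f x))) - (φ G + φ (-G))) := by ring
        have k1 : (1 - 2*η) * A ≤ (1 - 2*η) * (φ (-(f x)) - φ G) := by
          apply mul_le_mul_of_nonneg_left (by simp only [hAdef]; linarith) (by linarith)
        have k2 : η * B ≤ η * ((φ (f x) + φ (-(f x))) - (φ G + φ (-G))) := by
          apply mul_le_mul_of_nonneg_left (by simp only [hBdef]; linarith) hη0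
        have k5 : min A (B/2) ≤ (1 - 2*η) * A + η * B := by
          have m1 : min A (B/2) ≤ A := min_le_left _ _
          have m2 : min A (B/2) ≤ B/2 := min_le_right _ _
          nlinarith
        linarith

end
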